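/- Let ω ∈ [2, 3) be a real number and t ≥ 0 an integer. Define α = (2·(2/(ω−1))^t − (ω−1)²/2) / ((2/(ω−1))^t·(7−ω) − (ω²−1)/2) (the denominator is positive), and define the sequence α_0 = 1 − α and α_{i+1} = (2/(ω−1))·α_i + 1 − (4/(ω−1))·α for i = 0, 1, …, t. Then α_{t+1} = α; equivalently, 2α = α_i + (1 − α_{i+1})·(ω−1)/2 for every 0 ≤ i ≤ t. -/

import Mathlib

/-- For `ω ∈ [2,3)` and the exponent `α` defined by the closed formula
(whose denominator is positive), the sequence `α_0 = 1 - α`,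
`α_{i+1} = (2/(ω-1)) α_i + 1 - (4/(ω-1)) α` satisfies `α_{t+1} = α`, equivalently
`2α = α_i + (1 - α_{i+1})(ω-1)/2` for all `0 ≤ i ≤ t`. -/
theorem stmt_17 (ω : ℝ) (hω : ω ∈ Set.Ico (2 : ℝ) 3) (t : ℕ)
    (α : ℝ)
    (hα : α = (2 * (2 / (ω - 1)) ^ t - (ω - 1) ^ 2 / 2) /
      ((2 / (ω - 1)) ^ t * (7 - ω) - (ω ^ 2 - 1) / 2))
    (a : ℕ → ℝ) (ha0 : a 0 = 1 - α)
    (harec : ∀ i ≤ t, a (i + 1) = (2 / (ω - 1)) * a i + 1 - (4 / (ω - 1)) * α) :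
    0 < (2 / (ω - 1)) ^ t * (7 - ω) - (ω ^ 2 - 1) / 2 ∧
    a (t + 1) = α ∧
    (∀ i ≤ t, 2 * α = a i + (1 - a (i + 1)) * (ω - 1) / 2) := by
  obtain ⟨hω2, hω3⟩ := hω
  have hpos : (0:ℝ) < ω - 1 := by linarith
  have hne : ω - 1 ≠ 0 := ne_of_gt hpos
  have h3ne : ω - 3 ≠ 0 := by intro h; linarith
  have hq1 : (1:ℝ) ≤ 2 / (ω - 1) := by
    rw [le_div_iff₀ hpos]; linarith
  have hQ1 : (1:ℝ) ≤ (2 / (ω - 1)) ^ t := one_le_pow₀ hq1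
  have hD : 0 < (2 / (ω - 1)) ^ t * (7 - ω) - (ω ^ 2 - 1) / 2 := by
    have h7 : (0:ℝ) < 7 - ω := by linarith
    have : (7 - ω) * 1 ≤ (7 - ω) * (2 / (ω - 1)) ^ t :=
      mul_le_mul_of_nonneg_left hQ1 (le_of_lt h7)
    nlinarith
  have hDne : (2 / (ω - 1)) ^ t * (7 - ω) - (ω ^ 2 - 1) / 2 ≠ 0 := ne_of_gt hD
  set f : ℝ := (ω - 1 - 4 * α) / (ω - 3) with hfdef
  have hfix : (2 / (ω - 1)) * f + 1 - (4 / (ω - 1)) * α = f := by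
    rw [hfdef]
    field_simp
    ring
  -- closed form
  have key : ∀ i, i ≤ t + 1 → a i = f + (2 / (ω - 1)) ^ i * (1 - α - f) := by
    intro i
    induction i with
    | zero => intro _; rw [ha0, pow_zero]; ring
    | succ n ih =>
      intro hn
      have hnt : n ≤ t := Nat.lt_succ_iff.mp hn
      rw [harec n hnt, ih (le_trans hnt (Nat.le_succ t)), pow_succ]
      linear_combination hfix
  have hfinal : a (t + 1) = α := by
    have hk := key (t + 1) le_rfl
    rw [pow_succ] at hk
    rw [hk, hfdef]
    generalize hQg : ((2:ℝ) / (ω - 1)) ^ t = Q at hα hDne ⊢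
    rw [eq_div_iff hDne] at hα
    field_simp
    linear_combination 2 * hα
  refine ⟨hD, hfinal, ?_⟩
  intro i hi
  rw [harec i hi]
  have h1 : (ω - 1) * (ω - 1)⁻¹ = 1 := mul_inv_cancel₀ hne
  linear_combination (a i - 2 * α) * h1
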